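/- The canonical pre-Lie algebra homomorphism p : pL(V) → T̄(V) (induced by V ↪ T̄(V), where T̄(V) carries the pre-Lie structure of its associative product) restricts to an isomorphism from the Lie subalgebra of pL(V)_L generated by V onto the Lie subalgebra of T̄(V)_L generated by V. -/

import Mathlib

section Aux

variable {k P : Type} [Field k] [AddCommGroup P] [Module k P]

/-- Extended right-multiplication map of a pre-Lie algebra on `P × k`. -/
def preLieRho (mul : P →ₗ[k] P →ₗ[k] P) : P →ₗ[k] Module.End k (P × k) where
  toFun y :=
    { toFun := fun xc => (mul xc.1 y + xc.2 • y, (0 : k))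
      map_add' := by
        rintro ⟨a, c⟩ ⟨a', c'⟩
        simp [Prod.ext_iff, add_smul]
        abel
      map_smul' := by
        rintro t ⟨a, c⟩
        simp [Prod.ext_iff, smul_smul, smul_add] }
  map_add' y z := by
    apply LinearMap.ext; rintro ⟨a, c⟩
    simp [Prod.ext_iff, smul_add]
    abel
  map_smul' t y := by
    apply LinearMap.ext; rintro ⟨a, c⟩
    simp [Prod.ext_iff, smul_add, smul_smul, mul_comm]

lemma preLieRho_apply (mul : P →ₗ[k] P →ₗ[k] P) (y : P) (xc : P × k) :
    preLieRho mul y xc = (mul xc.1 y + xc.2 • y, (0 : k)) := rfl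

lemma preLieRho_bracket (mul : P →ₗ[k] P →ₗ[k] P)
    (h : ∀ x y z : P,
      mul (mul x y) z - mul x (mul y z) = mul (mul x z) y - mul x (mul z y))
    (x y : P) :
    preLieRho mul (mul x y - mul y x)
      = preLieRho mul y * preLieRho mul x - preLieRho mul x * preLieRho mul y := by
  apply LinearMap.ext
  rintro ⟨a, c⟩
  have hp := h a x y
  simp only [map_sub, LinearMap.sub_apply, Module.End.mul_apply, preLieRho_apply,
    map_add, map_smul, LinearMap.add_apply, LinearMap.smul_apply, zero_smul, smul_zero]
  refine Prod.ext ?_ (by simp [preLieRho_apply])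
  simp only [Prod.fst_sub, Prod.fst_add, preLieRho_apply, zero_smul, add_zero]
  linear_combination (norm := abel1) hp.symm

/-- `preLieRho` is injective (evaluate on `(0, 1)`). -/
lemma preLieRho_injOn (mul : P →ₗ[k] P →ₗ[k] P) {x : P}
    (hx : preLieRho mul x = 0) : x = 0 := by
  have := congrArg (fun f : Module.End k (P × k) => (f ((0 : P), (1 : k))).1) hx
  simpa [preLieRho_apply] using this

end Aux


/-- The universal property of the free pre-Lie algebra on a vector space `V`:
`P` with pre-Lie product `mul` and structure map `ι` is free if every linear map
from `V` to a pre-Lie algebra extends uniquely to a product-preserving linear map. -/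
structure IsFreePreLie (k : Type) [Field k] (V : Type) [AddCommGroup V] [Module k V]
    (P : Type) [AddCommGroup P] [Module k P]
    (mul : P →ₗ[k] P →ₗ[k] P) (ι : V →ₗ[k] P) : Prop where
  preLie : ∀ x y z : P,
    mul (mul x y) z - mul x (mul y z) = mul (mul x z) y - mul x (mul z y)
  lift : ∀ (Q : Type) [AddCommGroup Q] [Module k Q] (m : Q →ₗ[k] Q →ₗ[k] Q),
    (∀ x y z : Q, m (m x y) z - m x (m y z) = m (m x z) y - m x (m z y)) →
    ∀ f : V →ₗ[k] Q, ∃! g : P →ₗ[k] Q,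
      (∀ v, g (ι v) = f v) ∧ ∀ x y, g (mul x y) = m (g x) (g y)

/-- The Lie subalgebra (as a subspace) generated by the image of `ι`, for the
commutator bracket of `mul`. -/
def lieClosure {k : Type} [Field k] {V : Type} [AddCommGroup V] [Module k V]
    {P : Type} [AddCommGroup P] [Module k P]
    (mul : P →ₗ[k] P →ₗ[k] P) (ι : V →ₗ[k] P) : Submodule k P :=
  sInf {W : Submodule k P |
    (∀ v : V, ι v ∈ W) ∧ ∀ x ∈ W, ∀ y ∈ W, mul x y - mul y x ∈ W}

attribute [local instance] LieRing.ofAssociativeRing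

/-- The canonical pre-Lie homomorphism `p : pL(V) → T̄(V)` (induced by
`V ↪ T̄(V)`, with `T̄(V)` pre-Lie via its associative product) restricts to an
isomorphism from the Lie subalgebra of `pL(V)_L` generated by `V` onto the Lie
subalgebra of `T̄(V)_L` generated by `V`. -/
theorem canonical_map_restricts_to_lie_iso {k V P : Type} [Field k] [CharZero k]
    [AddCommGroup V] [Module k V] [AddCommGroup P] [Module k P]
    (mul : P →ₗ[k] P →ₗ[k] P) (ι : V →ₗ[k] P)
    (h : IsFreePreLie k V P mul ι)
    (p : P →ₗ[k] TensorAlgebra k V)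
    (hpι : ∀ v : V, p (ι v) = TensorAlgebra.ι k v)
    (hpmul : ∀ x y : P, p (mul x y) = p x * p y) :
    Set.InjOn p (lieClosure mul ι : Set P) ∧
    p '' (lieClosure mul ι : Set P)
      = (LieSubalgebra.lieSpan k (TensorAlgebra k V)
          (Set.range (TensorAlgebra.ι k : V →ₗ[k] TensorAlgebra k V)) :
            Set (TensorAlgebra k V)) := by
  classical
  set S : Set (Submodule k P) := {W : Submodule k P |
    (∀ v : V, ι v ∈ W) ∧ ∀ x ∈ W, ∀ y ∈ W, mul x y - mul y x ∈ W} with hS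
  have hCdef : lieClosure mul ι = sInf S := rfl
  have hmemι : ∀ v, ι v ∈ lieClosure mul ι := fun v =>
    Submodule.mem_sInf.2 fun W hW => hW.1 v
  have hbr : ∀ x ∈ lieClosure mul ι, ∀ y ∈ lieClosure mul ι,
      mul x y - mul y x ∈ lieClosure mul ι := fun x hx y hy =>
    Submodule.mem_sInf.2 fun W hW =>
      hW.2 x (Submodule.mem_sInf.1 hx W hW) y (Submodule.mem_sInf.1 hy W hW)
  have hCle : ∀ W ∈ S, lieClosure mul ι ≤ W := fun W hW => sInf_le hW
  -- the detecting algebra map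
  set ρ : P →ₗ[k] Module.End k (P × k) := preLieRho mul with hρ
  set oρ : P →ₗ[k] (Module.End k (P × k))ᵐᵒᵖ :=
    ((MulOpposite.opLinearEquiv k).toLinearMap.comp ρ) with hoρ
  set f : V →ₗ[k] (Module.End k (P × k))ᵐᵒᵖ := oρ.comp ι with hf
  set Φ : TensorAlgebra k V →ₐ[k] (Module.End k (P × k))ᵐᵒᵖ :=
    TensorAlgebra.lift k f with hΦ
  have hoρ_apply : ∀ x : P, oρ x = MulOpposite.op (ρ x) := fun x => rfl
  have hkey : ∀ x ∈ lieClosure mul ι, Φ (p x) = oρ x := by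
    have hker : LinearMap.ker (Φ.toLinearMap.comp p - oρ) ∈ S := by
      constructor
      · intro v
        simp only [LinearMap.mem_ker, LinearMap.sub_apply, LinearMap.coe_comp,
          Function.comp_apply, AlgHom.toLinearMap_apply, hpι v]
        rw [hΦ, TensorAlgebra.lift_ι_apply, hf]
        simp
      · intro x hx y hy
        simp only [LinearMap.mem_ker, LinearMap.sub_apply, LinearMap.coe_comp,
          Function.comp_apply, AlgHom.toLinearMap_apply, sub_eq_zero] at hx hy ⊢
        rw [map_sub, map_sub, hpmul, hpmul, map_mul, map_mul, hx, hy,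
          hoρ_apply, hoρ_apply, hoρ_apply, ← MulOpposite.op_mul, ← MulOpposite.op_mul,
          ← MulOpposite.op_sub, preLieRho_bracket mul h.preLie x y, ← hρ]
    intro x hx
    have := hCle _ hker hx
    simp only [LinearMap.mem_ker, LinearMap.sub_apply, LinearMap.coe_comp,
      Function.comp_apply, AlgHom.toLinearMap_apply, sub_eq_zero] at this
    exact this
  constructor
  · -- injectivity
    intro x hx y hy hxy
    have hsub : x - y ∈ lieClosure mul ι := Submodule.sub_mem _ hx hy
    have h0 : p (x - y) = 0 := by rw [map_sub, hxy, sub_self]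
    have hk := hkey _ hsub
    rw [h0, map_zero] at hk
    have hρ0 : ρ (x - y) = 0 := by
      have := hk.symm
      rw [hoρ_apply] at this
      simpa using congrArg MulOpposite.unop this
    exact sub_eq_zero.1 (preLieRho_injOn mul hρ0)
  · -- image
    apply Set.Subset.antisymm
    · -- p '' C ⊆ lieSpan
      rintro _ ⟨x, hx, rfl⟩
      have hW : Submodule.comap p
          (LieSubalgebra.lieSpan k (TensorAlgebra k V)
            (Set.range (TensorAlgebra.ι k : V →ₗ[k] TensorAlgebra k V))).toSubmodule ∈ S := by
        constructor
        · intro v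
          simp only [Submodule.mem_comap, hpι v]
          exact LieSubalgebra.subset_lieSpan ⟨v, rfl⟩
        · intro a ha b hb
          simp only [Submodule.mem_comap] at ha hb ⊢
          have : p (mul a b - mul b a) = ⁅p a, p b⁆ := by
            rw [map_sub, hpmul, hpmul, Ring.lie_def]
          rw [this]
          exact LieSubalgebra.lie_mem _ ha hb
      exact hCle _ hW hx
    · -- lieSpan ⊆ p '' C
      set K : LieSubalgebra k (TensorAlgebra k V) :=
        { (lieClosure mul ι).map p with
          lie_mem' := by
            rintro a b ⟨x, hx, rfl⟩ ⟨y, hy, rfl⟩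
            refine ⟨mul x y - mul y x, hbr x hx y hy, ?_⟩
            rw [map_sub, hpmul, hpmul, Ring.lie_def] } with hK
      have hle : LieSubalgebra.lieSpan k (TensorAlgebra k V)
          (Set.range (TensorAlgebra.ι k : V →ₗ[k] TensorAlgebra k V)) ≤ K := by
        rw [LieSubalgebra.lieSpan_le]
        rintro _ ⟨v, rfl⟩
        exact ⟨ι v, hmemι v, hpι v⟩
      intro a ha
      exact hle ha
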